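/- arXiv:0708.1054 — 2 statements merged into one kernel-verified Lean document; each statement's English description precedes it below -/
import Mathlib

section
/- Let n \ge 3 and suppose a_0 = a_1 < a_2 \le \dots \le a_l and a_l \ge a_{l+1} \ge \dots \ge a_{n-1} > a_n for some 2 \le l \le n-1. Then there exists s in (0,1) such that F_a' > 0 on (0,s), F_a'(s) = 0, and F_a' < 0 on (s,1); in particular s is the unique maximum point of F_a on [0,1] and F_a is strictly increasing on [0,s] and strictly decreasing on [s,1]. -/
open Finset Set

/- zpow monotonicity helpers -/
private lemma my_zpow_le {x y : ℝ} (hx : 0 < x) (hxy : x ≤ y) {k : ℤ} (hk : 0 ≤ k) :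
    x ^ k ≤ y ^ k := by
  lift k to ℕ using hk
  simpa using pow_le_pow_left₀ hx.le hxy _

private lemma my_zpow_lt {x y : ℝ} (hx : 0 < x) (hxy : x < y) {k : ℤ} (hk : 0 < k) :
    x ^ k < y ^ k := by
  lift k to ℕ using hk.le
  have : (1:ℕ) ≤ k := by exact_mod_cast hk
  simpa using pow_lt_pow_left₀ hxy hx.le (by omega)

private lemma my_zpow_anti {x y : ℝ} (hx : 0 < x) (hxy : x ≤ y) {k : ℤ} (hk : k ≤ 0) :
    y ^ k ≤ x ^ k := by
  have hy : 0 < y := hx.trans_le hxy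
  rw [show k = -(-k) from (neg_neg k).symm, ← inv_zpow' x, ← inv_zpow' y]
  exact my_zpow_le (by positivity) (by gcongr) (by omega)

private lemma my_zpow_anti_strict {x y : ℝ} (hx : 0 < x) (hxy : x < y) {k : ℤ} (hk : k < 0) :
    y ^ k < x ^ k := by
  have hy : 0 < y := hx.trans hxy
  rw [show k = -(-k) from (neg_neg k).symm, ← inv_zpow' x, ← inv_zpow' y]
  exact my_zpow_lt (by positivity) (by gcongr) (by omega)

/- derivative of the Bernstein sum -/
private lemma term_hasDeriv (n i : ℕ) (c : ℝ) (t : ℝ) :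
    HasDerivAt (fun t : ℝ => c * t ^ i * (1 - t) ^ (n - i))
      (c * ((i:ℝ) * t ^ (i-1) * (1-t) ^ (n-i) - ((n-i : ℕ):ℝ) * t ^ i * (1-t) ^ (n-i-1))) t := by
  have h1 : HasDerivAt (fun t : ℝ => c * t ^ i) (c * ((i:ℝ) * t ^ (i-1))) t :=
    (hasDerivAt_pow i t).const_mul c
  have h2 : HasDerivAt (fun t : ℝ => (1 - t) ^ (n - i))
      (((n-i : ℕ):ℝ) * (1-t) ^ (n-i-1) * (-1)) t :=
    ((hasDerivAt_id t).const_sub 1).pow (n - i)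
  have := h1.fun_mul h2
  refine this.congr_deriv ?_
  ring

private lemma F_hasDeriv (n : ℕ) (a : ℕ → ℝ) (t : ℝ) :
    HasDerivAt (fun t : ℝ => ∑ i ∈ Finset.range (n+1),
        a i * (n.choose i : ℝ) * t ^ i * (1 - t) ^ (n - i))
      (∑ i ∈ Finset.range (n+1), a i * (n.choose i : ℝ) *
        ((i:ℝ) * t ^ (i-1) * (1-t) ^ (n-i) - ((n-i : ℕ):ℝ) * t ^ i * (1-t) ^ (n-i-1))) t := by
  apply HasDerivAt.fun_sum
  intro i _
  exact term_hasDeriv n i _ t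

private lemma nat_id1 (n j : ℕ) (hn : 1 ≤ n) :
    ((n.choose (j+1) : ℝ)) * (j+1) = n * ((n-1).choose j) := by
  have := Nat.add_one_mul_choose_eq (n-1) j
  rw [Nat.sub_add_cancel hn] at this
  exact_mod_cast this.symm

private lemma nat_id2 (n i : ℕ) (hn : 1 ≤ n) :
    ((n - i : ℕ) : ℝ) * (n.choose i) = n * ((n-1).choose i) := by
  have h := Nat.choose_succ_right_eq n i
  have h1 := nat_id1 n i hn
  have h' : ((n.choose (i+1) : ℝ)) * (i+1) = (n.choose i) * ((n - i : ℕ)) := by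
    exact_mod_cast h
  nlinarith [h1, h']

private lemma sum_identity (n : ℕ) (hn : 1 ≤ n) (a : ℕ → ℝ) (t : ℝ) :
    (∑ i ∈ Finset.range (n+1), a i * (n.choose i : ℝ) *
        ((i:ℝ) * t ^ (i-1) * (1-t) ^ (n-i) - ((n-i : ℕ):ℝ) * t ^ i * (1-t) ^ (n-i-1)))
    = (n:ℝ) * ∑ i ∈ Finset.range n,
        (a (i+1) - a i) * ((n-1).choose i : ℝ) * t ^ i * (1-t) ^ (n-1-i) := by
  have e1 : ∑ i ∈ Finset.range (n+1), a i * (n.choose i : ℝ) *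
        ((i:ℝ) * t ^ (i-1) * (1-t) ^ (n-i) - ((n-i : ℕ):ℝ) * t ^ i * (1-t) ^ (n-i-1))
      = (∑ i ∈ Finset.range (n+1), a i * (n.choose i : ℝ) * ((i:ℝ) * t ^ (i-1) * (1-t) ^ (n-i)))
        - ∑ i ∈ Finset.range (n+1), a i * (n.choose i : ℝ) * (((n-i : ℕ):ℝ) * t ^ i * (1-t) ^ (n-i-1)) := by
    rw [← Finset.sum_sub_distrib]
    exact Finset.sum_congr rfl (fun i _ => by ring)
  have eA : (∑ i ∈ Finset.range (n+1), a i * (n.choose i : ℝ) * ((i:ℝ) * t ^ (i-1) * (1-t) ^ (n-i)))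
      = ∑ j ∈ Finset.range n, (n:ℝ) * (a (j+1) * ((n-1).choose j : ℝ) * t ^ j * (1-t) ^ (n-1-j)) := by
    rw [Finset.sum_range_succ']
    simp only [Nat.cast_zero, zero_mul, mul_zero, add_zero]
    refine Finset.sum_congr rfl (fun j _ => ?_)
    have h1 := nat_id1 n j hn
    have h2 : n - (j+1) = n - 1 - j := by omega
    have h3 : (j+1) - 1 = j := by omega
    rw [h2, h3]
    push_cast at h1 ⊢
    linear_combination (a (j+1) * t ^ j * (1-t)^(n-1-j)) * h1
  have eB : (∑ i ∈ Finset.range (n+1), a i * (n.choose i : ℝ) * (((n-i : ℕ):ℝ) * t ^ i * (1-t) ^ (n-i-1)))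
      = ∑ i ∈ Finset.range n, (n:ℝ) * (a i * ((n-1).choose i : ℝ) * t ^ i * (1-t) ^ (n-1-i)) := by
    rw [Finset.sum_range_succ]
    simp only [Nat.sub_self, Nat.cast_zero, zero_mul, mul_zero, add_zero]
    refine Finset.sum_congr rfl (fun i _ => ?_)
    have h1 := nat_id2 n i hn
    have h2 : n - i - 1 = n - 1 - i := by omega
    rw [h2]
    linear_combination (a i * t ^ i * (1-t)^(n-1-i)) * h1
  rw [e1, eA, eB, ← Finset.mul_sum, ← Finset.mul_sum, ← mul_sub, ← Finset.sum_sub_distrib]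
  congr 1
  exact Finset.sum_congr rfl (fun i _ => by ring)

section Q
variable (m l : ℕ) (c : ℕ → ℝ)

private noncomputable def Qf (x : ℝ) : ℝ := ∑ i ∈ Finset.range (m+1), c i * x ^ ((i:ℤ) - (l:ℤ))

variable {m l c}

private lemma Q_strictAnti (hl : 2 ≤ l) (hlm : l ≤ m) (hc1 : 0 < c 1)
    (hcup : ∀ i, i < l → 0 ≤ c i) (hcdown : ∀ i, l ≤ i → i ≤ m → c i ≤ 0)
    {x y : ℝ} (hx : 0 < x) (hxy : x < y) : Qf m l c y < Qf m l c x := by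
  apply Finset.sum_lt_sum
  · intro i hi
    rcases lt_trichotomy i l with h | h | h
    · exact mul_le_mul_of_nonneg_left
        (my_zpow_anti hx hxy.le (by omega)) (hcup i h)
    · subst h; simp
    · have him : i ≤ m := by simpa [Nat.lt_succ_iff] using hi
      exact mul_le_mul_of_nonpos_left
        (my_zpow_le hx hxy.le (by omega)) (hcdown i h.le him)
  · refine ⟨1, by simp [Nat.lt_succ_iff]; omega, ?_⟩
    exact mul_lt_mul_of_pos_left (my_zpow_anti_strict hx hxy (by omega)) hc1

private lemma Q_pos_small (hl : 2 ≤ l) (hlm : l ≤ m) (hc1 : 0 < c 1)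
    (hcup : ∀ i, i < l → 0 ≤ c i) (hcdown : ∀ i, l ≤ i → i ≤ m → c i ≤ 0) :
    ∃ x : ℝ, 0 < x ∧ 0 < Qf m l c x := by
  set S : ℝ := ∑ i ∈ Finset.range (m+1), min (c i) 0 with hS
  have hS0 : S ≤ 0 := Finset.sum_nonpos (fun i _ => min_le_right _ _)
  have h1S : (0:ℝ) < 1 - S := by linarith
  set x : ℝ := min 1 (c 1 / (1 - S)) with hxdef
  have hx : 0 < x := lt_min one_pos (div_pos hc1 h1S)
  have hx1 : x ≤ 1 := min_le_left _ _
  refine ⟨x, hx, ?_⟩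
  have key : ∀ i ∈ Finset.range (m+1),
      (if i = 1 then c 1 * x ^ ((1:ℤ) - (l:ℤ)) else 0) + min (c i) 0
        ≤ c i * x ^ ((i:ℤ) - (l:ℤ)) := by
    intro i hi
    have him : i ≤ m := by simpa [Nat.lt_succ_iff] using hi
    by_cases h1 : i = 1
    · subst h1; simp [min_eq_right hc1.le]
    · simp only [if_neg h1, zero_add]
      rcases lt_or_ge i l with h | h
      · have hci := hcup i h
        have hpos : (0:ℝ) ≤ c i * x ^ ((i:ℤ) - (l:ℤ)) := by positivity
        exact (min_le_right _ _).trans hpos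
      · have hci : c i ≤ 0 := hcdown i h him
        have hxk : x ^ ((i:ℤ) - (l:ℤ)) ≤ 1 := by
          simpa using my_zpow_le hx hx1 (k := (i:ℤ)-(l:ℤ)) (by omega)
        rw [min_eq_left hci]
        calc c i = c i * 1 := (mul_one _).symm
          _ ≤ c i * x ^ ((i:ℤ) - (l:ℤ)) := mul_le_mul_of_nonpos_left hxk hci
  have hsum : c 1 * x ^ ((1:ℤ) - (l:ℤ)) + S ≤ Qf m l c x := by
    have := Finset.sum_le_sum key
    rwa [Finset.sum_add_distrib, Finset.sum_ite_eq' (Finset.range (m+1)) 1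
      (fun _ => c 1 * x ^ ((1:ℤ) - (l:ℤ))),
      if_pos (by simp [Nat.lt_succ_iff]; omega : 1 ∈ Finset.range (m+1))] at this
  have e : x ^ ((1:ℤ)-(l:ℤ)) = x ^ ((2:ℤ)-(l:ℤ)) * x⁻¹ := by
    rw [show (1:ℤ)-(l:ℤ) = ((2:ℤ)-(l:ℤ)) + (-1) by ring, zpow_add₀ hx.ne', zpow_neg_one]
  have h2 : (1:ℝ) ≤ x ^ ((2:ℤ)-(l:ℤ)) := by
    simpa using my_zpow_anti hx hx1 (k := (2:ℤ)-(l:ℤ)) (by omega)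
  have h3 : x⁻¹ ≤ x ^ ((1:ℤ)-(l:ℤ)) := by
    rw [e]; nlinarith [inv_nonneg.mpr hx.le]
  have h4 : 1 - S ≤ c 1 * x⁻¹ := by
    have hxc : x ≤ c 1 / (1 - S) := min_le_right _ _
    have hxc' : x * (1 - S) ≤ c 1 := (le_div_iff₀ h1S).mp hxc
    rw [← div_eq_mul_inv, le_div_iff₀ hx]
    nlinarith
  have h5 : 1 - S ≤ c 1 * x ^ ((1:ℤ)-(l:ℤ)) := by
    calc 1 - S ≤ c 1 * x⁻¹ := h4
      _ ≤ c 1 * x ^ ((1:ℤ)-(l:ℤ)) := mul_le_mul_of_nonneg_left h3 hc1.le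
  linarith [hsum]

private lemma Q_neg_large (hl : 2 ≤ l) (hlm : l ≤ m)
    (hcup : ∀ i, i < l → 0 ≤ c i) (hcdown : ∀ i, l ≤ i → i ≤ m → c i ≤ 0)
    (hcm : c m < 0) :
    ∃ x : ℝ, 0 < x ∧ Qf m l c x < 0 := by
  set C : ℝ := ∑ i ∈ Finset.range (m+1), max (c i) 0 with hC
  have hC0 : 0 ≤ C := Finset.sum_nonneg (fun i _ => le_max_right _ _)
  set x : ℝ := max 1 (C / (-c m)) + 1 with hxdef
  have hx1 : (1:ℝ) ≤ x := by
    rw [hxdef]; have := le_max_left (1:ℝ) (C / (-c m)); linarith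
  have hx : 0 < x := by linarith
  refine ⟨x, hx, ?_⟩
  have key : ∀ i ∈ Finset.range (m+1),
      c i * x ^ ((i:ℤ) - (l:ℤ))
        ≤ max (c i) 0 * x⁻¹ + (if i = m then c m else 0) := by
    intro i hi
    have him : i ≤ m := by simpa [Nat.lt_succ_iff] using hi
    rcases lt_or_ge i l with h | h
    · have hci := hcup i h
      have him' : i ≠ m := by omega
      rw [if_neg him', add_zero, max_eq_left hci]
      have hxk : x ^ ((i:ℤ) - (l:ℤ)) ≤ x⁻¹ := by
        rw [← zpow_neg_one]
        exact zpow_le_zpow_right₀ hx1 (by omega)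
      exact mul_le_mul_of_nonneg_left hxk hci
    · have hci : c i ≤ 0 := hcdown i h him
      rw [max_eq_right hci]
      by_cases him' : i = m
      · rw [if_pos him', zero_mul, zero_add, him']
        have hxk : (1:ℝ) ≤ x ^ ((m:ℤ) - (l:ℤ)) := by
          simpa using zpow_le_zpow_right₀ hx1 (by omega : (0:ℤ) ≤ (m:ℤ)-(l:ℤ))
        calc c m * x ^ ((m:ℤ) - (l:ℤ)) ≤ c m * 1 := mul_le_mul_of_nonpos_left hxk hcm.le
          _ = c m := mul_one _
      · rw [if_neg him', add_zero, zero_mul]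
        have : (0:ℝ) < x ^ ((i:ℤ) - (l:ℤ)) := zpow_pos hx _
        nlinarith
  have hsum : Qf m l c x ≤ C * x⁻¹ + c m := by
    have := Finset.sum_le_sum key
    rwa [Finset.sum_add_distrib, ← Finset.sum_mul,
      Finset.sum_ite_eq' (Finset.range (m+1)) m (fun _ => c m),
      if_pos (by simp : m ∈ Finset.range (m+1))] at this
  have hxbig : C / (-c m) ≤ x - 1 := by
    have := le_max_right (1:ℝ) (C / (-c m)); rw [hxdef]; linarith
  have hcm' : (0:ℝ) < -c m := by linarith
  have h1 : C ≤ (x - 1) * (-c m) := (div_le_iff₀ hcm').mp hxbig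
  have h2 : C * x⁻¹ < -c m := by
    rw [← div_eq_mul_inv, div_lt_iff₀ hx]
    nlinarith
  linarith [hsum]

private lemma Q_continuousOn {u v : ℝ} (hu : 0 < u) :
    ContinuousOn (Qf m l c) (Icc u v) := by
  apply continuousOn_finset_sum
  intro i _
  intro x hx
  have hx0 : x ≠ 0 := by
    have := hx.1; intro h; rw [h] at this; linarith
  exact continuousWithinAt_const.mul
    ((continuousAt_zpow₀ x _ (Or.inl hx0)).continuousWithinAt)

private lemma Q_zero (hl : 2 ≤ l) (hlm : l ≤ m) (hc1 : 0 < c 1)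
    (hcup : ∀ i, i < l → 0 ≤ c i) (hcdown : ∀ i, l ≤ i → i ≤ m → c i ≤ 0)
    (hcm : c m < 0) :
    ∃ x₀ : ℝ, 0 < x₀ ∧ Qf m l c x₀ = 0 := by
  obtain ⟨x₁, hx₁, hQ₁⟩ := Q_pos_small hl hlm hc1 hcup hcdown
  obtain ⟨x₂, hx₂, hQ₂⟩ := Q_neg_large hl hlm hcup hcdown hcm
  have hx12 : x₁ < x₂ := by
    by_contra h
    push_neg at h
    rcases eq_or_lt_of_le h with h' | h'
    · rw [h'] at hQ₂; linarith
    · have := Q_strictAnti hl hlm hc1 hcup hcdown hx₂ h'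
      linarith
  have hcont : ContinuousOn (Qf m l c) (Icc x₁ x₂) := Q_continuousOn hx₁
  have := intermediate_value_Icc' hx12.le hcont
  obtain ⟨x₀, hx₀mem, hx₀⟩ := this ⟨hQ₂.le, hQ₁.le⟩
  exact ⟨x₀, lt_of_lt_of_le hx₁ hx₀mem.1, hx₀⟩

private lemma G_eq_Q (hlm : l ≤ m) {t : ℝ} (ht : 0 < t) (ht1 : t < 1) :
    ∑ i ∈ Finset.range (m+1), c i * t ^ i * (1-t) ^ (m-i)
      = t ^ l * (1-t) ^ (m-l) * Qf m l c (t/(1-t)) := by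
  have hu : (0:ℝ) < 1 - t := by linarith
  rw [Qf, Finset.mul_sum]
  refine Finset.sum_congr rfl (fun i hi => ?_)
  have him : i ≤ m := by simpa [Nat.lt_succ_iff] using hi
  have e1 : (t/(1-t)) ^ ((i:ℤ)-(l:ℤ)) = t ^ ((i:ℤ)-(l:ℤ)) * (1-t) ^ ((l:ℤ)-(i:ℤ)) := by
    rw [div_zpow, div_eq_mul_inv, ← zpow_neg, neg_sub]
  have A : t ^ (l:ℤ) * t ^ ((i:ℤ)-(l:ℤ)) = t ^ (i:ℤ) := by
    rw [← zpow_add₀ ht.ne', show (l:ℤ) + ((i:ℤ)-(l:ℤ)) = (i:ℤ) by ring]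
  have B : (1-t) ^ ((m:ℤ)-(l:ℤ)) * (1-t) ^ ((l:ℤ)-(i:ℤ)) = (1-t) ^ ((m:ℤ)-(i:ℤ)) := by
    rw [← zpow_add₀ hu.ne', show ((m:ℤ)-(l:ℤ)) + ((l:ℤ)-(i:ℤ)) = (m:ℤ)-(i:ℤ) by ring]
  rw [← zpow_natCast t i, ← zpow_natCast t l, ← zpow_natCast (1-t) (m-i),
    ← zpow_natCast (1-t) (m-l),
    show ((m-i:ℕ):ℤ) = (m:ℤ)-(i:ℤ) by omega,
    show ((m-l:ℕ):ℤ) = (m:ℤ)-(l:ℤ) by omega, e1, ← A, ← B]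
  ring

end Q

/-- Unimodality: if `a_0 = a_1 < a_2 ≤ ⋯ ≤ a_l` and `a_l ≥ ⋯ ≥ a_{n-1} > a_n`, then
there is `s ∈ (0,1)` with `F_a' > 0` on `(0,s)`, `F_a'(s) = 0`, `F_a' < 0` on `(s,1)`;
`F_a` is strictly increasing on `[0,s]`, strictly decreasing on `[s,1]`, and `s` is
the unique maximum point of `F_a` on `[0,1]`. -/
theorem bernstein_unimodal (n : ℕ) (hn : 3 ≤ n) (a : ℕ → ℝ) (l : ℕ)
    (hl : 2 ≤ l) (hl' : l ≤ n - 1)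
    (h01 : a 0 = a 1) (h12 : a 1 < a 2)
    (hup : ∀ i, 2 ≤ i → i < l → a i ≤ a (i+1))
    (hdown : ∀ i, l ≤ i → i < n - 1 → a (i+1) ≤ a i)
    (hlast : a n < a (n-1)) :
    ∃ s ∈ Ioo (0:ℝ) 1,
      (∀ t ∈ Ioo (0:ℝ) s,
        0 < deriv (fun t : ℝ => ∑ i ∈ Finset.range (n+1),
            a i * (n.choose i : ℝ) * t ^ i * (1 - t) ^ (n - i)) t) ∧
      deriv (fun t : ℝ => ∑ i ∈ Finset.range (n+1),
          a i * (n.choose i : ℝ) * t ^ i * (1 - t) ^ (n - i)) s = 0 ∧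
      (∀ t ∈ Ioo s (1:ℝ),
        deriv (fun t : ℝ => ∑ i ∈ Finset.range (n+1),
            a i * (n.choose i : ℝ) * t ^ i * (1 - t) ^ (n - i)) t < 0) ∧
      StrictMonoOn (fun t : ℝ => ∑ i ∈ Finset.range (n+1),
          a i * (n.choose i : ℝ) * t ^ i * (1 - t) ^ (n - i)) (Icc (0:ℝ) s) ∧
      StrictAntiOn (fun t : ℝ => ∑ i ∈ Finset.range (n+1),
          a i * (n.choose i : ℝ) * t ^ i * (1 - t) ^ (n - i)) (Icc s (1:ℝ)) ∧
      (∀ t ∈ Icc (0:ℝ) 1, t ≠ s →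
        (∑ i ∈ Finset.range (n+1),
            a i * (n.choose i : ℝ) * t ^ i * (1 - t) ^ (n - i))
          < ∑ i ∈ Finset.range (n+1),
              a i * (n.choose i : ℝ) * s ^ i * (1 - s) ^ (n - i)) := by
  set F : ℝ → ℝ := fun t : ℝ => ∑ i ∈ Finset.range (n+1),
      a i * (n.choose i : ℝ) * t ^ i * (1 - t) ^ (n - i) with hF
  set m : ℕ := n - 1 with hm
  have hmn : m + 1 = n := by omega
  have hm2 : 2 ≤ m := by omega
  have hlm : l ≤ m := hl'
  set c : ℕ → ℝ := fun i => (a (i+1) - a i) * ((n-1).choose i : ℝ) with hc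
  -- coefficient sign facts
  have hc1 : 0 < c 1 := by
    have h1 : ((n-1).choose 1 : ℝ) = ((n-1 : ℕ) : ℝ) := by rw [Nat.choose_one_right]
    have h2 : (0:ℝ) < ((n-1 : ℕ) : ℝ) := by
      have : 0 < n - 1 := by omega
      exact_mod_cast this
    simp only [hc]
    rw [h1]
    have : a 1 < a 2 := h12
    apply mul_pos (by norm_num; linarith) h2
  have hcup : ∀ i, i < l → 0 ≤ c i := by
    intro i hil
    simp only [hc]
    apply mul_nonneg _ (Nat.cast_nonneg _)
    match i, hil with
    | 0, _ => simp; linarith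
    | 1, _ => norm_num; linarith
    | (k+2), h => exact sub_nonneg.mpr (hup (k+2) (by omega) h)
  have hcdown : ∀ i, l ≤ i → i ≤ m → c i ≤ 0 := by
    intro i h1 h2
    simp only [hc]
    have hle : a (i+1) ≤ a i := by
      rcases eq_or_lt_of_le h2 with h' | h'
      · have : i + 1 = n := by omega
        rw [this, h']
        rw [hm] at *
        exact hlast.le
      · exact hdown i h1 (by omega)
    exact mul_nonpos_iff.mpr (Or.inr ⟨by linarith, Nat.cast_nonneg _⟩)
  have hcm : c m < 0 := by
    simp only [hc]
    have e1 : (n-1).choose m = 1 := by rw [← hm, Nat.choose_self]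
    have e2 : m + 1 = n := hmn
    rw [e1, e2, Nat.cast_one, mul_one, hm]
    linarith
  -- the zero of Q
  obtain ⟨x₀, hx₀, hQx₀⟩ := Q_zero hl hlm hc1 hcup hcdown hcm
  set s : ℝ := x₀ / (1 + x₀) with hs
  have h1x : (0:ℝ) < 1 + x₀ := by linarith
  have hs0 : 0 < s := div_pos hx₀ h1x
  have hs1 : s < 1 := by
    rw [hs, div_lt_one h1x]; linarith
  have hφ : s / (1 - s) = x₀ := by
    rw [hs]; field_simp; ring
  have hφmono : ∀ u v : ℝ, 0 < u → u < v → v < 1 → u/(1-u) < v/(1-v) := by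
    intro u v hu huv hv1
    rw [div_lt_div_iff₀ (by linarith) (by linarith)]
    nlinarith
  -- derivative formula
  have hd : ∀ t : ℝ, deriv F t = (n:ℝ) * ∑ i ∈ Finset.range n,
      (a (i+1) - a i) * ((n-1).choose i : ℝ) * t ^ i * (1-t) ^ (n-1-i) := by
    intro t
    rw [(F_hasDeriv n a t).deriv, sum_identity n (by omega) a t]
  have hsign : ∀ t : ℝ, 0 < t → t < 1 →
      deriv F t = (n:ℝ) * (t ^ l * (1-t) ^ (m-l) * Qf m l c (t/(1-t))) := by
    intro t ht ht1
    rw [hd t, ← G_eq_Q hlm ht ht1]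
    congr 1
    rw [← hmn]
    refine Finset.sum_congr rfl (fun i _ => ?_)
    simp only [hc, Nat.add_sub_cancel, ← hm]
  have hnpos : (0:ℝ) < (n:ℝ) := by exact_mod_cast (by omega : 0 < n)
  -- sign of the derivative
  have hpos : ∀ t ∈ Ioo (0:ℝ) s, 0 < deriv F t := by
    rintro t ⟨ht0, hts⟩
    have hts1 : t < 1 := hts.trans hs1
    have hφt : t/(1-t) < x₀ := by
      rw [← hφ]; exact hφmono t s ht0 hts hs1
    have hQt : 0 < Qf m l c (t/(1-t)) := by
      have := Q_strictAnti hl hlm hc1 hcup hcdown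
        (div_pos ht0 (by linarith)) hφt
      rw [hQx₀] at this; exact this
    rw [hsign t ht0 hts1]
    exact mul_pos hnpos (mul_pos (mul_pos (pow_pos ht0 l)
      (pow_pos (by linarith) (m-l))) hQt)
  have hzero : deriv F s = 0 := by
    rw [hsign s hs0 hs1, hφ, hQx₀, mul_zero, mul_zero]
  have hneg : ∀ t ∈ Ioo s (1:ℝ), deriv F t < 0 := by
    rintro t ⟨hst, ht1⟩
    have ht0 : 0 < t := hs0.trans hst
    have hφt : x₀ < t/(1-t) := by
      rw [← hφ]; exact hφmono s t hs0 hst ht1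
    have hQt : Qf m l c (t/(1-t)) < 0 := by
      have := Q_strictAnti hl hlm hc1 hcup hcdown hx₀ hφt
      rw [hQx₀] at this; exact this
    rw [hsign t ht0 ht1]
    exact mul_neg_of_pos_of_neg hnpos
      (mul_neg_of_pos_of_neg (mul_pos (pow_pos ht0 l)
        (pow_pos (by linarith) (m-l))) hQt)
  -- monotonicity
  have hcont : ∀ u v : ℝ, ContinuousOn F (Icc u v) :=
    fun u v t _ => (F_hasDeriv n a t).continuousAt.continuousWithinAt
  have hmono : StrictMonoOn F (Icc (0:ℝ) s) := by
    apply strictMonoOn_of_deriv_pos (convex_Icc 0 s) (hcont 0 s)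
    rw [interior_Icc]
    exact hpos
  have hanti : StrictAntiOn F (Icc s (1:ℝ)) := by
    apply strictAntiOn_of_deriv_neg (convex_Icc s 1) (hcont s 1)
    rw [interior_Icc]
    exact hneg
  refine ⟨s, ⟨hs0, hs1⟩, hpos, hzero, hneg, hmono, hanti, ?_⟩
  intro t ht hne
  rcases lt_or_gt_of_ne hne with h | h
  · exact hmono ⟨ht.1, h.le⟩ ⟨hs0.le, le_rfl⟩ h
  · exact hanti ⟨le_rfl, hs1.le⟩ ⟨h.le, ht.2⟩ h
end

section
/- The closure, in the uniform norm on [0,1], of the set of finite nonnegative linear combinations of Bernstein polynomials with nondecreasing coefficient sequences is exactly the set of nondecreasing continuous real-valued functions on [0,1]. -/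
open Finset Set

/-- The set `D₁` of nonnegative linear combinations of Bernstein polynomials with
nondecreasing coefficient sequences, as continuous functions on `[0,1]`. -/
def monotoneBernsteinCombos : Set C(Icc (0:ℝ) 1, ℝ) :=
  {f | ∃ (N : ℕ) (c : Fin N → ℝ) (m : Fin N → ℕ) (a : Fin N → ℕ → ℝ),
    (∀ k, 0 ≤ c k) ∧
    (∀ k i, i < m k → a k i ≤ a k (i+1)) ∧
    (∀ x : Icc (0:ℝ) 1, f x = ∑ k, c k * ∑ i ∈ Finset.range (m k + 1),
        a k i * ((m k).choose i : ℝ) * (x:ℝ) ^ i * (1 - (x:ℝ)) ^ (m k - i))}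

lemma bern_hasDerivAt (m : ℕ) (a : ℕ → ℝ) (x : ℝ) :
    HasDerivAt (fun x : ℝ => ∑ i ∈ Finset.range (m+1),
        a i * (m.choose i : ℝ) * x ^ i * (1 - x) ^ (m - i))
      ((m:ℝ) * ∑ i ∈ Finset.range m,
        (a (i+1) - a i) * ((m-1).choose i : ℝ) * x ^ i * (1 - x) ^ (m-1-i)) x := by
  have key : ∀ i ∈ Finset.range (m+1),
      HasDerivAt (fun x : ℝ => a i * (m.choose i : ℝ) * x ^ i * (1 - x) ^ (m - i))
        (a i * (m.choose i : ℝ) *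
          ((i : ℝ) * x ^ (i-1) * (1 - x) ^ (m-i) - ((m-i : ℕ) : ℝ) * x ^ i * (1 - x) ^ (m-i-1))) x := by
    intro i _
    have h1 : HasDerivAt (fun x : ℝ => x ^ i) ((i:ℝ) * x ^ (i-1)) x := hasDerivAt_pow i x
    have h2 : HasDerivAt (fun x : ℝ => (1 - x) ^ (m-i)) (-((((m-i:ℕ)):ℝ) * (1-x)^(m-i-1))) x := by
      have h : HasDerivAt (fun x : ℝ => 1 - x) (-1) x := by
        simpa using (hasDerivAt_id x).const_sub 1
      simpa using h.fun_pow (m-i)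
    have heq : (fun x : ℝ => a i * (m.choose i:ℝ) * x ^ i * (1-x)^(m-i))
        = fun x : ℝ => (a i * (m.choose i:ℝ)) * (x^i * (1-x)^(m-i)) := by
      funext y; ring
    rw [heq]
    convert (h1.mul h2).const_mul (a i * (m.choose i:ℝ)) using 1 <;> try rfl
    ring
  have hsum := HasDerivAt.fun_sum key
  convert hsum using 1 <;> try rfl
  have split : ∑ i ∈ Finset.range (m+1), a i * (m.choose i : ℝ) *
      ((i : ℝ) * x ^ (i-1) * (1 - x) ^ (m-i) - ((m-i : ℕ) : ℝ) * x ^ i * (1 - x) ^ (m-i-1))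
      = (∑ i ∈ Finset.range (m+1), a i * (m.choose i : ℝ) * (i : ℝ) * x ^ (i-1) * (1 - x) ^ (m-i))
        - ∑ i ∈ Finset.range (m+1), a i * (m.choose i : ℝ) * ((m-i : ℕ) : ℝ) * x ^ i * (1 - x) ^ (m-i-1) := by
    rw [← Finset.sum_sub_distrib]; apply Finset.sum_congr rfl; intro i _; ring
  rw [split]
  have hA : (∑ i ∈ Finset.range (m+1), a i * (m.choose i : ℝ) * (i : ℝ) * x ^ (i-1) * (1 - x) ^ (m-i))
      = ∑ i ∈ Finset.range m, a (i+1) * ((m:ℝ) * ((m-1).choose i : ℝ)) * x ^ i * (1 - x) ^ (m-1-i) := by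
    rw [Finset.sum_range_succ']
    simp only [Nat.cast_zero, mul_zero, zero_mul, add_zero]
    apply Finset.sum_congr rfl
    intro i hi
    rw [Finset.mem_range] at hi
    have hc : (m.choose (i+1) : ℝ) * ((i:ℝ)+1) = (m : ℝ) * ((m-1).choose i : ℝ) := by
      have h := Nat.add_one_mul_choose_eq (m-1) i
      rw [Nat.sub_add_cancel (by omega : 1 ≤ m)] at h
      exact_mod_cast h.symm
    have hsub : m - (i+1) = m - 1 - i := by omega
    have hsub2 : (i+1) - 1 = i := by omega
    rw [hsub, hsub2]
    push_cast
    linear_combination (a (i+1) * x^i * (1-x)^(m-1-i)) * hc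
  have hB : (∑ i ∈ Finset.range (m+1), a i * (m.choose i : ℝ) * ((m-i:ℕ) : ℝ) * x ^ i * (1 - x) ^ (m-i-1))
      = ∑ i ∈ Finset.range m, a i * ((m:ℝ) * ((m-1).choose i : ℝ)) * x ^ i * (1 - x) ^ (m-1-i) := by
    rw [Finset.sum_range_succ]
    simp only [Nat.sub_self, Nat.cast_zero, mul_zero, zero_mul, add_zero]
    apply Finset.sum_congr rfl
    intro i hi
    rw [Finset.mem_range] at hi
    have hc : (m.choose i : ℝ) * ((m-i:ℕ) : ℝ) = (m : ℝ) * ((m-1).choose i : ℝ) := by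
      have h1 := Nat.choose_succ_right_eq m i
      have h := Nat.add_one_mul_choose_eq (m-1) i
      rw [Nat.sub_add_cancel (by omega : 1 ≤ m)] at h
      have h2 : m * (m-1).choose i = m.choose i * (m - i) := by
        rw [h]; simpa [Nat.succ_eq_add_one] using h1
      exact_mod_cast h2.symm
    have hsub : m - i - 1 = m - 1 - i := by omega
    rw [hsub]
    linear_combination (a i * x^i * (1-x)^(m-1-i)) * hc
  rw [hA, hB, ← Finset.sum_sub_distrib, Finset.mul_sum]
  apply Finset.sum_congr rfl
  intro i _
  ring

lemma bern_monotoneOn (m : ℕ) (a : ℕ → ℝ) (ha : ∀ i, i < m → a i ≤ a (i+1)) :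
    MonotoneOn (fun x : ℝ => ∑ i ∈ Finset.range (m+1),
      a i * (m.choose i:ℝ) * x^i * (1-x)^(m-i)) (Set.Icc 0 1) := by
  apply monotoneOn_of_deriv_nonneg (convex_Icc 0 1)
  · apply Continuous.continuousOn
    apply continuous_finset_sum
    intro i _
    fun_prop
  · intro x _
    exact (bern_hasDerivAt m a x).differentiableAt.differentiableWithinAt
  · intro x hx
    rw [(bern_hasDerivAt m a x).deriv]
    rw [interior_Icc] at hx
    obtain ⟨h0, h1⟩ := hx
    apply mul_nonneg (by positivity)
    apply Finset.sum_nonneg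
    intro i hi
    have hai := ha i (Finset.mem_range.mp hi)
    have hd : 0 ≤ a (i+1) - a i := by linarith
    have hx0 : (0:ℝ) ≤ x := le_of_lt h0
    have hx1 : (0:ℝ) ≤ 1 - x := by linarith
    positivity

lemma combos_monotone {f : C(Icc (0:ℝ) 1, ℝ)} (hf : f ∈ monotoneBernsteinCombos) :
    Monotone f := by
  obtain ⟨N, c, m, a, hc, ha, heval⟩ := hf
  intro x y hxy
  rw [heval x, heval y]
  apply Finset.sum_le_sum
  intro k _
  apply mul_le_mul_of_nonneg_left _ (hc k)
  exact bern_monotoneOn (m k) (a k) (ha k) x.2 y.2 (Subtype.coe_le_coe.mpr hxy)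

lemma pt_mem (i n : ℕ) : ((min i n : ℕ) : ℝ)/n ∈ Set.Icc (0:ℝ) 1 := by
  rcases Nat.eq_zero_or_pos n with h|h
  · subst h; simp
  · constructor
    · positivity
    · rw [div_le_one (by exact_mod_cast h)]
      exact_mod_cast Nat.min_le_right i n

lemma bernsteinApprox_mem (n : ℕ) (f : C(Icc (0:ℝ) 1, ℝ)) (hf : Monotone f) :
    bernsteinApproximation n f ∈ monotoneBernsteinCombos := by
  refine ⟨1, fun _ => 1, fun _ => n, fun _ i => f ⟨((min i n : ℕ) : ℝ)/n, pt_mem i n⟩,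
    fun _ => zero_le_one, ?_, ?_⟩
  · intro k i hi
    have hi' : i < n := hi
    apply hf
    show (((min i n : ℕ) : ℝ)/n : ℝ) ≤ ((min (i+1) n : ℕ) : ℝ)/n
    have hn : (0:ℝ) < n := by
      have : 0 < n := by omega
      exact_mod_cast this
    gcongr
    omega
  · intro x
    rw [Fin.sum_univ_one, one_mul, bernsteinApproximation.apply]
    have : ∀ k : Fin (n+1), f (bernstein.z k) * bernstein n k x
        = (fun i : ℕ => f ⟨((min i n : ℕ) : ℝ)/n, pt_mem i n⟩ * (n.choose i : ℝ)
            * (x:ℝ)^i * (1-(x:ℝ))^(n-i)) (k : ℕ) := by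
      intro k
      have hk : min (k:ℕ) n = (k:ℕ) := Nat.min_eq_left (Nat.lt_succ_iff.mp k.2)
      have hz : bernstein.z k = ⟨((min (k:ℕ) n : ℕ) : ℝ)/n, pt_mem k n⟩ := by
        apply Subtype.ext
        simp [bernstein.z, hk]
      rw [hz, bernstein_apply]
      ring
    simp only [smul_eq_mul, mul_comm (bernstein n _ x)]
    rw [Finset.sum_congr rfl (fun k _ => this k),
      Fin.sum_univ_eq_sum_range (fun i : ℕ => f ⟨((min i n : ℕ) : ℝ)/n, pt_mem i n⟩
        * (n.choose i : ℝ) * (x:ℝ)^i * (1-(x:ℝ))^(n-i)) (n+1)]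

/-- The closure in uniform norm of `D₁` is exactly the set of nondecreasing
continuous functions on `[0,1]`. -/
theorem closure_monotoneBernsteinCombos :
    closure monotoneBernsteinCombos
      = {f : C(Icc (0:ℝ) 1, ℝ) | Monotone f} := by
  apply le_antisymm
  · have hclosed : IsClosed {f : C(Icc (0:ℝ) 1, ℝ) | Monotone f} := by
      have : {f : C(Icc (0:ℝ) 1, ℝ) | Monotone f}
          = ⋂ (p : Icc (0:ℝ) 1 × Icc (0:ℝ) 1) (_ : p.1 ≤ p.2), {f : C(Icc (0:ℝ) 1, ℝ) | f p.1 ≤ f p.2} := by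
        ext f
        simp only [Set.mem_setOf_eq, Set.mem_iInter]
        constructor
        · intro h p hp; exact h hp
        · intro h x y hxy; exact h (x, y) hxy
      rw [this]
      exact isClosed_iInter fun p => isClosed_iInter fun _ =>
        isClosed_le (by continuity) (by continuity)
    exact hclosed.closure_subset_iff.mpr fun f hf => combos_monotone hf
  · intro f hf
    exact mem_closure_of_tendsto (bernsteinApproximation_uniform f)
      (Filter.Eventually.of_forall fun n => bernsteinApprox_mem n f hf)
end
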